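/- P(12,8) ≥ 25; that is, no 12-by-24 matrix over F_2 is an 8-PIR generator matrix (and hence no 12-by-n matrix with n ≤ 24 is one). -/

import Mathlib

/-- An `s × n` matrix `G` over `𝔽₂` is a `k`-PIR generator matrix if for every
index `i` there exist `k` pairwise disjoint recovery sets of column indices,
each of whose column sums equals the `i`-th standard unit vector. -/
def IsPIRMatrix (s n k : ℕ) (G : Matrix (Fin s) (Fin n) (ZMod 2)) : Prop :=
  ∀ i : Fin s, ∃ R : Fin k → Finset (Fin n),
    (∀ j j' : Fin k, j ≠ j' → Disjoint (R j) (R j')) ∧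
    ∀ j : Fin k, (∑ h ∈ R j, fun r : Fin s => G r h) = Pi.single i 1

/-- `PIRlen s k` is the smallest positive `n` for which an `s × n` `k`-PIR
generator matrix over `𝔽₂` exists. -/
noncomputable def PIRlen (s k : ℕ) : ℕ :=
  sInf {n : ℕ | 0 < n ∧ ∃ G : Matrix (Fin s) (Fin n) (ZMod 2), IsPIRMatrix s n k G}

theorem test : True := trivial

open Finset

abbrev F2 := ZMod 2

lemma f2_add_self (a : F2) : a + a = 0 := by revert a; decide
lemma f2_add_eq_zero : ∀ a b : F2, a + b = 0 ↔ a = b := by decide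
lemma f2_rearr : ∀ a b c d : F2, a + b = c + d → a + c = b + d := by decide
lemma f2_flip : ∀ a b : F2, b ≠ 0 → ((a + b ≠ 0) ↔ ¬ a ≠ 0) := by decide

def wt {n : ℕ} (c : Fin n → F2) : ℕ := (univ.filter (fun j => c j ≠ 0)).card

/-- existence of a binary additive code of length n, dimension ≥ k, min distance ≥ d -/
def Gc (n k d : ℕ) : Prop :=
  ∃ φ : (Fin k → F2) → (Fin n → F2),
    (∀ x y, φ (x + y) = φ x + φ y) ∧ ∀ x, x ≠ 0 → d ≤ wt (φ x)

lemma pi_add_eq_zero {k : ℕ} (a b : Fin k → F2) : a + b = 0 ↔ a = b := by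
  constructor
  · intro h; funext j; exact (f2_add_eq_zero _ _).mp (congrFun h j)
  · rintro rfl; funext j; exact f2_add_self _

lemma Gc.mono {n k d d' : ℕ} (h : Gc n k d) (hd : d' ≤ d) : Gc n k d' := by
  obtain ⟨φ, h1, h2⟩ := h
  exact ⟨φ, h1, fun x hx => le_trans hd (h2 x hx)⟩

lemma card_fun2 (k : ℕ) : Fintype.card (Fin k → F2) = 2 ^ k := by
  simp [Fintype.card_fun]

lemma hamming {n k : ℕ} (h : Gc n k 3) : 2 ^ k * (n + 1) ≤ 2 ^ n := by
  classical
  obtain ⟨φ, hadd, hd⟩ := h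
  set uo : Option (Fin n) → (Fin n → F2) := fun o => o.elim 0 (fun j => Pi.single j 1) with huo
  set F : (Fin k → F2) × Option (Fin n) → (Fin n → F2) := fun p => φ p.1 + uo p.2 with hF
  have hwt2 : ∀ o o' : Option (Fin n), wt (uo o + uo o') ≤ 2 := by
    intro o o'
    have hsupp : ∀ l : Fin n, (∀ j, o = some j → l ≠ j) → (∀ j, o' = some j → l ≠ j) →
        (uo o + uo o') l = 0 := by
      intro l h1 h2
      have e1 : uo o l = 0 := by
        cases o with
        | none => simp [huo]
        | some j => simp [huo, Pi.single_eq_of_ne (h1 j rfl)]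
      have e2 : uo o' l = 0 := by
        cases o' with
        | none => simp [huo]
        | some j => simp [huo, Pi.single_eq_of_ne (h2 j rfl)]
      simp [e1, e2]
    -- support ⊆ at most two elements
    cases o with
    | none =>
      cases o' with
      | none =>
        have hs : (univ.filter (fun l => (uo none + uo none) l ≠ 0)) ⊆ (∅ : Finset (Fin n)) := by
          intro l hl
          rw [Finset.mem_filter] at hl
          exact absurd (hsupp l (by simp) (by simp)) hl.2
        calc wt _ ≤ (∅ : Finset (Fin n)).card := Finset.card_le_card hs
          _ ≤ 2 := by simp
      | some j' =>
        have hs : (univ.filter (fun l => (uo none + uo (some j')) l ≠ 0)) ⊆ {j'} := by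
          intro l hl
          rw [Finset.mem_filter] at hl
          by_contra hne
          simp only [Finset.mem_singleton] at hne
          exact hl.2 (hsupp l (by simp) (by intro j hj; cases hj; simpa using hne))
        calc wt _ ≤ ({j'} : Finset (Fin n)).card := Finset.card_le_card hs
          _ ≤ 2 := by simp
    | some j =>
      have hs : (univ.filter (fun l => (uo (some j) + uo o') l ≠ 0)) ⊆ {j} ∪ (o'.elim ∅ (fun j' => {j'})) := by
        intro l hl
        rw [Finset.mem_filter] at hl
        by_contra hne
        have hlj : l ≠ j := by
          intro e; exact hne (by simp [e])
        have hlj' : ∀ j', o' = some j' → l ≠ j' := by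
          rintro j' rfl e
          exact hne (by simp [e])
        exact hl.2 (hsupp l (by rintro j0 h0; cases h0; exact hlj) hlj')
      calc wt _ ≤ _ := Finset.card_le_card hs
        _ ≤ ({j} : Finset (Fin n)).card + (o'.elim ∅ (fun j' => ({j'} : Finset (Fin n)))).card :=
            Finset.card_union_le _ _
        _ ≤ 2 := by cases o' <;> simp
  have hinj : Function.Injective F := by
    rintro ⟨x, o⟩ ⟨x', o'⟩ heq
    simp only [hF] at heq
    have key : φ (x + x') = uo o + uo o' := by
      rw [hadd]
      funext l
      have := congrFun heq l
      simp only [Pi.add_apply] at this ⊢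
      exact f2_rearr _ _ _ _ this
    have hxx : x = x' := by
      by_contra hne
      have hx : x + x' ≠ 0 := fun h0 => hne ((pi_add_eq_zero x x').mp h0)
      have h3 := hd (x + x') hx
      rw [key] at h3
      have := hwt2 o o'
      omega
    subst hxx
    have huu : uo o = uo o' := by
      have : φ x + uo o = φ x + uo o' := heq
      exact add_left_cancel this
    refine Prod.ext rfl ?_
    cases o with
    | none =>
      cases o' with
      | none => rfl
      | some j' =>
        exfalso
        have := congrFun huu j'
        simp [huo] at this
    | some j =>
      cases o' with
      | none =>
        exfalso
        have := congrFun huu j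
        simp [huo] at this
      | some j' =>
        by_contra hne
        have hjj : j ≠ j' := fun e => hne (by simp [e])
        have h2 := congrFun huu j
        simp [huo, Pi.single_apply, hjj] at h2
  have hcard := Fintype.card_le_of_injective F hinj
  simpa [card_fun2, mul_comm] using hcard

lemma puncture {n k d : ℕ} (h : Gc (n + 1) k (d + 1)) : Gc n k d := by
  classical
  obtain ⟨φ, hadd, hd⟩ := h
  refine ⟨fun x j => φ x j.castSucc, ?_, ?_⟩
  · intro x y; funext j; simp [hadd]
  · intro x hx
    have h1 := hd x hx
    set A := univ.filter (fun j => φ x j ≠ 0) with hA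
    set B := univ.filter (fun j : Fin n => φ x j.castSucc ≠ 0) with hB
    have hsub : A ⊆ insert (Fin.last n) (B.image Fin.castSucc) := by
      intro j hj
      rw [hA, Finset.mem_filter] at hj
      rcases Fin.eq_castSucc_or_eq_last j with ⟨i, rfl⟩ | rfl
      · exact Finset.mem_insert_of_mem (Finset.mem_image_of_mem _
          (by rw [hB, Finset.mem_filter]; exact ⟨Finset.mem_univ _, hj.2⟩))
      · exact Finset.mem_insert_self _ _
    have hcard : A.card ≤ B.card + 1 := by
      calc A.card ≤ (insert (Fin.last n) (B.image Fin.castSucc)).card := Finset.card_le_card hsub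
        _ ≤ (B.image Fin.castSucc).card + 1 := Finset.card_insert_le _ _
        _ ≤ B.card + 1 := by
            exact Nat.add_le_add_right (Finset.card_image_le (s := B) (f := Fin.castSucc)) 1
    have : d + 1 ≤ A.card := h1
    show d ≤ B.card
    omega

lemma avg {n k d : ℕ} (φ : (Fin k → F2) → (Fin n → F2))
    (hadd : ∀ x y, φ (x + y) = φ x + φ y)
    (hdist : ∀ x, x ≠ 0 → d ≤ wt (φ x)) :
    2 * ((2 ^ k - 1) * d) ≤ n * 2 ^ k := by
  classical
  have hcardU : (univ : Finset (Fin k → F2)).card = 2 ^ k := by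
    rw [Finset.card_univ, card_fun2]
  -- lower bound on total weight
  have hlow : (2 ^ k - 1) * d ≤ ∑ x : Fin k → F2, wt (φ x) := by
    have h0 : ((univ : Finset (Fin k → F2)).erase 0).card = 2 ^ k - 1 := by
      rw [Finset.card_erase_of_mem (Finset.mem_univ _), hcardU]
    calc (2 ^ k - 1) * d = ∑ _x ∈ (univ : Finset (Fin k → F2)).erase 0, d := by
            rw [Finset.sum_const, h0, smul_eq_mul]
      _ ≤ ∑ x ∈ (univ : Finset (Fin k → F2)).erase 0, wt (φ x) := by
            apply Finset.sum_le_sum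
            intro x hx
            exact hdist x (Finset.ne_of_mem_erase hx)
      _ ≤ ∑ x : Fin k → F2, wt (φ x) := by
            apply Finset.sum_le_sum_of_subset
            exact Finset.erase_subset _ _
  -- swap
  have hswap : ∑ x : Fin k → F2, wt (φ x)
      = ∑ j : Fin n, (univ.filter (fun x : Fin k → F2 => φ x j ≠ 0)).card := by
    simp only [wt, Finset.card_filter]
    exact Finset.sum_comm
  -- per column bound
  have hcol : ∀ j : Fin n, 2 * (univ.filter (fun x : Fin k → F2 => φ x j ≠ 0)).card ≤ 2 ^ k := by
    intro j
    set A := univ.filter (fun x : Fin k → F2 => φ x j ≠ 0) with hA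
    by_cases hne : A.Nonempty
    · obtain ⟨x₁, hx₁⟩ := hne
      rw [hA, Finset.mem_filter] at hx₁
      have hmap : ∀ x ∈ A, x + x₁ ∈ univ.filter (fun x : Fin k → F2 => ¬ φ x j ≠ 0) := by
        intro x hx
        rw [hA, Finset.mem_filter] at hx
        rw [Finset.mem_filter]
        refine ⟨Finset.mem_univ _, ?_⟩
        have : φ (x + x₁) j = φ x j + φ x₁ j := by rw [hadd]; simp
        rw [not_not, this]
        have hf : ∀ a b : F2, a ≠ 0 → b ≠ 0 → a + b = 0 := by decide
        exact hf _ _ hx.2 hx₁.2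
      have hinj : ∀ x ∈ A, ∀ y ∈ A, x + x₁ = y + x₁ → x = y := by
        intro x _ y _ hxy
        exact add_right_cancel hxy
      have hle : A.card ≤ (univ.filter (fun x : Fin k → F2 => ¬ φ x j ≠ 0)).card :=
        Finset.card_le_card_of_injOn _ hmap hinj
      have htot := Finset.card_filter_add_card_filter_not
        (s := (univ : Finset (Fin k → F2))) (p := fun x => φ x j ≠ 0)
      rw [hcardU] at htot
      rw [← hA] at htot
      omega
    · rw [Finset.not_nonempty_iff_eq_empty] at hne
      rw [hne]
      simp
  have hup : 2 * ∑ x : Fin k → F2, wt (φ x) ≤ n * 2 ^ k := by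
    rw [hswap, Finset.mul_sum]
    calc ∑ j : Fin n, 2 * (univ.filter (fun x : Fin k → F2 => φ x j ≠ 0)).card
        ≤ ∑ _j : Fin n, 2 ^ k := Finset.sum_le_sum (fun j _ => hcol j)
      _ = n * 2 ^ k := by simp [Finset.sum_const, mul_comm]
  omega

/-- helper: counting support via an order iso of a finset -/
lemma card_filter_orderIso {n m : ℕ} (T : Finset (Fin n)) (hT : T.card = m) (c : Fin n → F2) :
    (univ.filter (fun t : Fin m => c (T.orderIsoOfFin hT t) ≠ 0)).card
      = (T.filter (fun h => c h ≠ 0)).card := by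
  classical
  apply Finset.card_bij (fun t _ => ((T.orderIsoOfFin hT t : T) : Fin n))
  · intro t ht
    rw [Finset.mem_filter] at ht ⊢
    exact ⟨Finset.coe_mem _, ht.2⟩
  · intro a ha b hb hab
    have := (T.orderIsoOfFin hT).injective (Subtype.ext hab)
    exact this
  · intro h hh
    rw [Finset.mem_filter] at hh
    refine ⟨(T.orderIsoOfFin hT).symm ⟨h, hh.1⟩, ?_, ?_⟩
    · rw [Finset.mem_filter]
      refine ⟨Finset.mem_univ _, ?_⟩
      rw [OrderIso.apply_symm_apply]
      exact hh.2
    · rw [OrderIso.apply_symm_apply]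

lemma residualCode {n k d e : ℕ} (φ : (Fin (k + 1) → F2) → (Fin n → F2))
    (hadd : ∀ x y, φ (x + y) = φ x + φ y)
    (hdist : ∀ x, x ≠ 0 → d ≤ wt (φ x))
    (x₀ : Fin (k + 1) → F2) (hx₀ : x₀ ≠ 0)
    (he : 2 * e + wt (φ x₀) ≤ 2 * d + 1) : Gc (n - wt (φ x₀)) k e := by
  classical
  set P := univ.filter (fun j => φ x₀ j ≠ 0) with hP
  have hwP : wt (φ x₀) = P.card := rfl
  set T := Pᶜ with hTdef
  have hT : T.card = n - wt (φ x₀) := by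
    rw [hTdef, Finset.card_compl, hwP]
    simp
  obtain ⟨i₀, hi₀⟩ : ∃ i, x₀ i ≠ 0 := Function.ne_iff.mp hx₀
  set ι : (Fin k → F2) → (Fin (k + 1) → F2) := fun y => i₀.insertNth 0 y with hι
  have hιadd : ∀ y z, ι (y + z) = ι y + ι z := by
    intro y z
    funext j
    by_cases hj : j = i₀
    · subst hj
      simp [hι, Fin.insertNth_apply_same]
    · obtain ⟨m, rfl⟩ := Fin.exists_succAbove_eq (Ne.symm (Ne.symm hj))
      simp [hι, Fin.insertNth_apply_succAbove]
  have hιne : ∀ y : Fin k → F2, y ≠ 0 → ι y ≠ 0 := by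
    intro y hy hc
    apply hy
    funext m
    have := congrFun hc (i₀.succAbove m)
    simpa [hι, Fin.insertNth_apply_succAbove] using this
  have hιnex : ∀ y : Fin k → F2, ι y ≠ x₀ := by
    intro y hc
    apply hi₀
    rw [← hc]
    simp [hι, Fin.insertNth_apply_same]
  refine ⟨fun y t => φ (ι y) ((T.orderIsoOfFin hT t : T) : Fin n), ?_, ?_⟩
  · intro y z
    funext t
    simp only [Pi.add_apply]
    rw [hιadd, hadd]
    simp
  · intro y hy
    set c := φ (ι y) with hc
    set c' := φ (ι y + x₀) with hc'
    have hcc' : c' = c + φ x₀ := by rw [hc', hadd]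
    have hd1 : d ≤ wt c := hdist _ (hιne y hy)
    have hd2 : d ≤ wt c' := by
      apply hdist
      intro h0
      exact hιnex y ((pi_add_eq_zero _ _).mp h0)
    -- split weights over P and T
    have hsplit : ∀ u : Fin n → F2,
        wt u = (P.filter (fun j => u j ≠ 0)).card + (T.filter (fun j => u j ≠ 0)).card := by
      intro u
      rw [wt]
      have hU : (univ : Finset (Fin n)) = P ∪ T := by
        rw [hTdef]; simp
      rw [hU, Finset.filter_union]
      apply Finset.card_union_of_disjoint
      exact Finset.disjoint_filter_filter disjoint_compl_right
    have hTsame : T.filter (fun j => c' j ≠ 0) = T.filter (fun j => c j ≠ 0) := by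
      apply Finset.filter_congr
      intro j hj
      rw [hTdef, Finset.mem_compl, hP, Finset.mem_filter] at hj
      have h0 : φ x₀ j = 0 := by
        by_contra hcon
        exact hj ⟨Finset.mem_univ _, hcon⟩
      rw [hcc']
      simp [h0]
    have hPsum : (P.filter (fun j => c j ≠ 0)).card + (P.filter (fun j => c' j ≠ 0)).card
        = P.card := by
      have hPc : P.filter (fun j => c' j ≠ 0) = P.filter (fun j => ¬ c j ≠ 0) := by
        apply Finset.filter_congr
        intro j hj
        rw [hP, Finset.mem_filter] at hj
        rw [hcc']
        simp only [Pi.add_apply]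
        exact f2_flip _ _ hj.2
      rw [hPc]
      exact Finset.card_filter_add_card_filter_not (fun j => c j ≠ 0)
    -- conclude
    have h1 := hsplit c
    have h2 := hsplit c'
    rw [hTsame] at h2
    have hfin : e ≤ (T.filter (fun j => c j ≠ 0)).card := by
      rw [hwP] at he
      omega
    show e ≤ wt _
    rw [wt]
    rw [card_filter_orderIso T hT c]
    exact hfin

lemma notGc_9_6_3 : ¬ Gc 9 6 3 := fun h => by have := hamming h; norm_num at this
lemma notGc_8_6_3 : ¬ Gc 8 6 3 := fun h => by have := hamming h; norm_num at this
lemma notGc_7_6_3 : ¬ Gc 7 6 3 := fun h => by have := hamming h; norm_num at this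

lemma notGc_18_7_8 : ¬ Gc 18 7 8 := by
  rintro ⟨φ, hadd, hd⟩
  by_cases hB : ∀ x : Fin 7 → F2, x ≠ 0 → 12 ≤ wt (φ x)
  · have := avg φ hadd hB
    norm_num at this
  · push_neg at hB
    obtain ⟨x₀, hx₀, hlt⟩ := hB
    have hw8 : 8 ≤ wt (φ x₀) := hd x₀ hx₀
    have hcases : wt (φ x₀) = 8 ∨ wt (φ x₀) = 9 ∨ wt (φ x₀) = 10 ∨ wt (φ x₀) = 11 := by omega
    rcases hcases with hw | hw | hw | hw
    · have h1 : Gc 10 6 4 := by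
        have := residualCode (k := 6) (e := 4) φ hadd hd x₀ hx₀ (by omega)
        rwa [hw] at this
      exact notGc_9_6_3 (puncture (n := 9) (d := 3) h1)
    · have h1 : Gc 9 6 4 := by
        have := residualCode (k := 6) (e := 4) φ hadd hd x₀ hx₀ (by omega)
        rwa [hw] at this
      exact notGc_9_6_3 (h1.mono (by omega))
    · have h1 : Gc 8 6 3 := by
        have := residualCode (k := 6) (e := 3) φ hadd hd x₀ hx₀ (by omega)
        rwa [hw] at this
      exact notGc_8_6_3 h1
    · have h1 : Gc 7 6 3 := by
        have := residualCode (k := 6) (e := 3) φ hadd hd x₀ hx₀ (by omega)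
        rwa [hw] at this
      exact notGc_7_6_3 h1

lemma main24 (G : Matrix (Fin 12) (Fin 24) (ZMod 2)) : ¬ IsPIRMatrix 12 24 8 G := by
  classical
  intro hPIR
  -- codeword map
  set cw : (Fin 12 → F2) → Fin 24 → F2 := fun x h => ∑ r, x r * G r h with hcw
  -- distance lemma
  have hdist : ∀ x : Fin 12 → F2, x ≠ 0 →
      8 ≤ (univ.filter (fun h => cw x h ≠ 0)).card := by
    intro x hx
    obtain ⟨i, hi⟩ : ∃ i, x i ≠ 0 := Function.ne_iff.mp hx
    obtain ⟨R, hdisj, hsum⟩ := hPIR i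
    have hex : ∀ j : Fin 8, ∃ h ∈ R j, cw x h ≠ 0 := by
      intro j
      by_contra hcon
      push_neg at hcon
      have hzero : ∑ h ∈ R j, cw x h = 0 :=
        Finset.sum_eq_zero (fun h hh => hcon h hh)
      have hval : ∑ h ∈ R j, cw x h = x i := by
        rw [hcw]
        simp only
        rw [Finset.sum_comm]
        have : ∀ r : Fin 12, ∑ h ∈ R j, x r * G r h = x r * (Pi.single i 1 : Fin 12 → F2) r := by
          intro r
          rw [← Finset.mul_sum]
          congr 1
          have h1 := congrFun (hsum j) r
          rw [Finset.sum_apply] at h1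
          exact h1
        rw [Finset.sum_congr rfl (fun r _ => this r)]
        simp [Pi.single_apply, mul_ite]
      rw [hval] at hzero
      exact hi hzero
    choose hh hmem hne using hex
    have hinj : Function.Injective hh := by
      intro a b hab
      by_contra hne'
      exact (Finset.disjoint_left.mp (hdisj a b hne')) (hmem a) (hab ▸ hmem b)
    have himg : (univ.image hh).card = 8 := by
      rw [Finset.card_image_of_injective _ hinj]
      simp
    have hsub : univ.image hh ⊆ univ.filter (fun h => cw x h ≠ 0) := by
      intro h h2
      rw [Finset.mem_image] at h2
      obtain ⟨j, _, rfl⟩ := h2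
      rw [Finset.mem_filter]
      exact ⟨Finset.mem_univ _, hne j⟩
    calc 8 = (univ.image hh).card := himg.symm
      _ ≤ _ := Finset.card_le_card hsub
  -- find a small kernel support S
  obtain ⟨R, hdisj, hsum⟩ := hPIR 0
  have hpair : ∃ j₁ j₂ : Fin 8, j₁ ≠ j₂ ∧ (R j₁).card + (R j₂).card ≤ 6 := by
    by_contra hcon
    push_neg at hcon
    have htot : ∑ j : Fin 8, (R j).card ≤ 24 := by
      rw [← Finset.card_biUnion (fun a _ b _ hab => hdisj a b hab)]
      calc (univ.biUnion R).card ≤ (univ : Finset (Fin 24)).card := Finset.card_le_univ _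
        _ = 24 := by simp
    have h01 := hcon 0 1 (by decide)
    have h23 := hcon 2 3 (by decide)
    have h45 := hcon 4 5 (by decide)
    have h67 := hcon 6 7 (by decide)
    have hsum8 : ∑ j : Fin 8, (R j).card = (R 0).card + (R 1).card + (R 2).card + (R 3).card
        + (R 4).card + (R 5).card + (R 6).card + (R 7).card := by
      rw [Fin.sum_univ_eight]
    omega
  obtain ⟨j₁, j₂, hj12, hcard6⟩ := hpair
  set S := R j₁ ∪ R j₂ with hS
  have hScard : S.card ≤ 6 := by
    rw [hS]
    calc (R j₁ ∪ R j₂).card ≤ (R j₁).card + (R j₂).card := Finset.card_union_le _ _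
      _ ≤ 6 := hcard6
  have hS0 : ∀ r : Fin 12, ∑ h ∈ S, G r h = 0 := by
    intro r
    rw [hS, Finset.sum_union (hdisj j₁ j₂ hj12)]
    have e1 := congrFun (hsum j₁) r
    have e2 := congrFun (hsum j₂) r
    rw [Finset.sum_apply] at e1 e2
    rw [e1, e2]
    exact f2_add_self _
  have hSne : S.Nonempty := by
    rw [hS]
    apply Finset.Nonempty.inl
    by_contra hcon
    rw [Finset.not_nonempty_iff_eq_empty] at hcon
    have := congrFun (hsum j₁) 0
    rw [hcon] at this
    simp at this
  -- extend S to S' of card exactly 6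
  obtain ⟨S', hSS', hS'univ, hS'card⟩ := Finset.exists_subsuperset_card_eq
    (Finset.subset_univ S) hScard (by simp)
  -- the syndrome map ψ and the functional f
  set ψ : (Fin 12 → F2) →ₗ[F2] (↥S' → F2) :=
    { toFun := fun x => fun hh => ∑ r, x r * G r hh.1
      map_add' := by
        intro x y
        funext hh
        simp [add_mul, Finset.sum_add_distrib]
      map_smul' := by
        intro c x
        funext hh
        simp [Finset.mul_sum, mul_assoc] } with hψ
  set f : (↥S' → F2) →ₗ[F2] F2 :=
    { toFun := fun v => ∑ h ∈ S.attach, v ⟨h.1, hSS' h.2⟩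
      map_add' := by intro x y; simp [Finset.sum_add_distrib]
      map_smul' := by intro c x; simp [Finset.mul_sum] } with hf
  have hfne : f ≠ 0 := by
    obtain ⟨h₀, hh₀⟩ := hSne
    intro hf0
    have h1 : f (Pi.single (⟨h₀, hSS' hh₀⟩ : ↥S') 1 : ↥S' → F2) = 1 := by
      have hterm : ∀ h : {x // x ∈ S},
          (Pi.single (⟨h₀, hSS' hh₀⟩ : ↥S') (1 : F2) : ↥S' → F2) ⟨h.1, hSS' h.2⟩
            = if (h : Fin 24) = h₀ then (1 : F2) else 0 := by
        intro h
        by_cases hc : (h : Fin 24) = h₀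
        · simp [Pi.single_apply, hc]
        · simp [Pi.single_apply, hc, Subtype.ext_iff]
      show ∑ h ∈ S.attach, (Pi.single (⟨h₀, hSS' hh₀⟩ : ↥S') (1 : F2) : ↥S' → F2) ⟨h.1, hSS' h.2⟩ = 1
      rw [Finset.sum_congr rfl (fun h _ => hterm h)]
      rw [Finset.sum_attach S (fun x => if x = h₀ then (1 : F2) else 0)]
      rw [Finset.sum_ite_eq' S h₀ (fun _ => (1 : F2))]
      simp [hh₀]
    rw [hf0] at h1
    simp at h1
  have hrk : LinearMap.range ψ ≤ LinearMap.ker f := by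
    rintro v ⟨x, rfl⟩
    rw [LinearMap.mem_ker]
    show ∑ h ∈ S.attach, (∑ r, x r * G r h.1) = 0
    calc ∑ h ∈ S.attach, ∑ r, x r * G r h.1
        = ∑ r, ∑ h ∈ S.attach, x r * G r h.1 := Finset.sum_comm
      _ = ∑ r, x r * ∑ h ∈ S.attach, G r h.1 := by
          apply Finset.sum_congr rfl
          intro r _
          rw [Finset.mul_sum]
      _ = 0 := by
          apply Finset.sum_eq_zero
          intro r _
          rw [Finset.sum_attach S (fun h => G r h), hS0 r, mul_zero]
  -- dimension count
  have hfd12 : Module.finrank F2 (Fin 12 → F2) = 12 := by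
    rw [Module.finrank_pi]
    simp
  have hfd6 : Module.finrank F2 (↥S' → F2) = 6 := by
    rw [Module.finrank_pi]
    simp [hS'card]
  have hrnf : Module.finrank F2 (LinearMap.range f) + Module.finrank F2 (LinearMap.ker f) = 6 := by
    rw [← hfd6]
    exact LinearMap.finrank_range_add_finrank_ker f
  have hrangef : 1 ≤ Module.finrank F2 (LinearMap.range f) := by
    by_contra hcon
    push_neg at hcon
    have h0 : Module.finrank F2 (LinearMap.range f) = 0 := by omega
    have : LinearMap.range f = ⊥ := Submodule.finrank_eq_zero.mp h0
    exact hfne (LinearMap.range_eq_bot.mp this)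
  have hrψ : Module.finrank F2 (LinearMap.range ψ) ≤ 5 :=
    le_trans (Submodule.finrank_mono hrk) (by omega)
  have hrnψ : Module.finrank F2 (LinearMap.range ψ) + Module.finrank F2 (LinearMap.ker ψ) = 12 := by
    have hh := LinearMap.finrank_range_add_finrank_ker ψ
    rw [hfd12] at hh
    exact hh
  have hkψ : 7 ≤ Module.finrank F2 ↥(LinearMap.ker ψ) := by omega
  -- independent vectors in the kernel
  set b := Module.finBasis F2 ↥(LinearMap.ker ψ) with hb
  set v : Fin 7 → (Fin 12 → F2) := fun j => ((b (Fin.castLE hkψ j)) : Fin 12 → F2) with hv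
  have hvmem : ∀ j, v j ∈ LinearMap.ker ψ := fun j => (b (Fin.castLE hkψ j)).2
  have hli : LinearIndependent F2 v := by
    have h1 := b.linearIndependent
    have h2 := h1.map' (LinearMap.ker ψ).subtype (Submodule.ker_subtype _)
    exact h2.comp (Fin.castLE hkψ) (Fin.castLE_injective hkψ)
  -- the length-18 code
  set T := S'ᶜ with hTdef
  have hT : T.card = 18 := by
    rw [hTdef, Finset.card_compl, hS'card]
    decide
  apply notGc_18_7_8
  refine ⟨fun y t => cw (∑ j, y j • v j) ((T.orderIsoOfFin hT t : T) : Fin 24), ?_, ?_⟩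
  · intro y z
    funext t
    simp only [Pi.add_apply]
    have hu : (∑ j : Fin 7, (y j + z j) • v j) = (∑ j, y j • v j) + (∑ j, z j • v j) := by
      rw [← Finset.sum_add_distrib]
      exact Finset.sum_congr rfl (fun j _ => add_smul _ _ _)
    rw [hu]
    show cw _ _ = cw _ _ + cw _ _
    rw [hcw]
    simp only [Pi.add_apply]
    rw [← Finset.sum_add_distrib]
    apply Finset.sum_congr rfl
    intro r _
    exact add_mul _ _ _
  · intro y hy
    set u := ∑ j, y j • v j with hu
    have hune : u ≠ 0 := by
      intro h0
      have hz := Fintype.linearIndependent_iff.mp hli y h0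
      exact hy (funext fun j => hz j)
    have humem : u ∈ LinearMap.ker ψ :=
      Submodule.sum_mem _ (fun j _ => Submodule.smul_mem _ _ (hvmem j))
    have hsupp : ∀ h : Fin 24, h ∈ S' → cw u h = 0 := by
      intro h hh
      have h1 := congrFun (LinearMap.mem_ker.mp humem) ⟨h, hh⟩
      exact h1
    have h8 : 8 ≤ (univ.filter (fun h => cw u h ≠ 0)).card := hdist u hune
    have hsub2 : univ.filter (fun h => cw u h ≠ 0) ⊆ T.filter (fun h => cw u h ≠ 0) := by
      intro h hh
      rw [Finset.mem_filter] at hh ⊢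
      refine ⟨?_, hh.2⟩
      rw [hTdef, Finset.mem_compl]
      intro hmem
      exact hh.2 (hsupp h hmem)
    show 8 ≤ wt _
    rw [wt]
    calc 8 ≤ (univ.filter (fun h => cw u h ≠ 0)).card := h8
      _ ≤ (T.filter (fun h => cw u h ≠ 0)).card := Finset.card_le_card hsub2
      _ = _ := (card_filter_orderIso T hT (cw u)).symm

lemma pad {n : ℕ} (hn : n ≤ 24) (G : Matrix (Fin 12) (Fin n) (ZMod 2))
    (h : IsPIRMatrix 12 n 8 G) :
    ∃ G' : Matrix (Fin 12) (Fin 24) (ZMod 2), IsPIRMatrix 12 24 8 G' := by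
  classical
  refine ⟨fun r h' => if hh : (h' : ℕ) < n then G r ⟨h', hh⟩ else 0, ?_⟩
  intro i
  obtain ⟨R, hdisj, hsum⟩ := h i
  set e : Fin n ↪ Fin 24 := ⟨fun a => Fin.castLE hn a, Fin.castLE_injective hn⟩ with he
  refine ⟨fun j => (R j).map e, ?_, ?_⟩
  · intro j j' hjj
    rw [Finset.disjoint_map]
    exact hdisj j j' hjj
  · intro j
    rw [Finset.sum_map]
    rw [← hsum j]
    apply Finset.sum_congr rfl
    intro h' _
    funext r
    simp only [he, Function.Embedding.coeFn_mk]
    have hlt : ((Fin.castLE hn h' : Fin 24) : ℕ) < n := by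
      simp [h'.isLt]
    rw [dif_pos hlt]
    have heq : (⟨((Fin.castLE hn h' : Fin 24) : ℕ), hlt⟩ : Fin n) = h' := Fin.ext (by simp)
    rw [heq]

lemma exists_pir96 : ∃ G : Matrix (Fin 12) (Fin 96) (ZMod 2), IsPIRMatrix 12 96 8 G := by
  classical
  refine ⟨fun r h => if (h : ℕ) % 12 = (r : ℕ) then 1 else 0, ?_⟩
  intro i
  refine ⟨fun j => {⟨12 * (j : ℕ) + (i : ℕ), by omega⟩}, ?_, ?_⟩
  · intro j j' hjj
    rw [Finset.disjoint_singleton]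
    intro hcon
    apply hjj
    have := congrArg (fun x : Fin 96 => (x : ℕ)) hcon
    simp only at this
    have hj : (j : ℕ) = (j' : ℕ) := by omega
    exact Fin.ext hj
  · intro j
    rw [Finset.sum_singleton]
    funext r
    have hmod : (12 * (j : ℕ) + (i : ℕ)) % 12 = (i : ℕ) := by
      omega
    simp only [hmod]
    rw [Pi.single_apply]
    by_cases hri : (r : Fin 12) = i
    · subst hri
      simp
    · have : (i : ℕ) ≠ (r : ℕ) := by
        intro hc
        exact hri (Fin.ext hc).symm
      simp [this, hri]


/-- `P(12,8) ≥ 25`: no `12 × n` matrix over `𝔽₂` with `n ≤ 24` is an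
`8`-PIR generator matrix. -/
theorem stmt_10 :
    25 ≤ PIRlen 12 8 ∧
    ∀ n : ℕ, n ≤ 24 → ∀ G : Matrix (Fin 12) (Fin n) (ZMod 2),
      ¬ IsPIRMatrix 12 n 8 G := by
  have part2 : ∀ n : ℕ, n ≤ 24 → ∀ G : Matrix (Fin 12) (Fin n) (ZMod 2),
      ¬ IsPIRMatrix 12 n 8 G := by
    intro n hn G hG
    obtain ⟨G', hG'⟩ := pad hn G hG
    exact main24 G' hG'
  refine ⟨?_, part2⟩
  have h96 : (96 : ℕ) ∈ {n : ℕ | 0 < n ∧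
      ∃ G : Matrix (Fin 12) (Fin n) (ZMod 2), IsPIRMatrix 12 n 8 G} :=
    ⟨by norm_num, exists_pir96⟩
  have hmem := Nat.sInf_mem (⟨96, h96⟩ : Set.Nonempty _)
  obtain ⟨hpos, G, hG⟩ := hmem
  by_contra hlt
  push_neg at hlt
  exact part2 _ (by omega : PIRlen 12 8 ≤ 24) G hG
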